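/- Let H_0 be a positive semidefinite Hermitian operator on a finite-dimensional complex inner product space whose kernel is one-dimensional and spanned by a unit vector ψ, with smallest non-zero eigenvalue at least μ > 0. Let V be Hermitian and Δ > 0 with 2‖V‖ < Δμ. Then λ_0(Δ H_0 + V) is a non-degenerate eigenvalue, and any unit eigenvector g of Δ H_0 + V with eigenvalue λ_0(Δ H_0 + V) satisfies |⟨ψ, g⟩|² ≥ 1 − ‖V‖²/(Δμ − ‖V‖)². -/

import Mathlib

open scoped InnerProductSpace ComplexOrder

/-- Eigenvalues of a Hermitian matrix, listed in non-decreasing order with multiplicity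
(junk value `0` for non-Hermitian matrices). -/
noncomputable def eigs {N : ℕ} (A : Matrix (Fin N) (Fin N) ℂ) : Fin N → ℝ :=
  if hA : A.IsHermitian then hA.eigenvalues ∘ Tuple.sort hA.eigenvalues else 0

/-- The operator norm of a matrix, acting on Euclidean space. -/
noncomputable def opNorm {N : ℕ} (A : Matrix (Fin N) (Fin N) ℂ) : ℝ :=
  ‖Matrix.toEuclideanCLM (𝕜 := ℂ) (n := Fin N) A‖

variable {N : ℕ}

/-- reinterpret a plain vector as a Euclidean space element -/
def gsbE (v : Fin N → ℂ) : EuclideanSpace ℂ (Fin N) := WithLp.toLp 2 v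

lemma gsb_norm_mulVec_le (A : Matrix (Fin N) (Fin N) ℂ) (x : EuclideanSpace ℂ (Fin N)) :
    ‖gsbE (A.mulVec x)‖ ≤ opNorm A * ‖x‖ :=
  (Matrix.toEuclideanCLM (𝕜 := ℂ) A).le_opNorm x

lemma gsb_herm_inner {A : Matrix (Fin N) (Fin N) ℂ} (hA : A.IsHermitian)
    (u x : EuclideanSpace ℂ (Fin N)) :
    ⟪gsbE (A.mulVec u), x⟫_ℂ = ⟪u, gsbE (A.mulVec x)⟫_ℂ := by
  have hs := (Matrix.isHermitian_iff_isSymmetric.mp hA) u x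
  simpa [Matrix.toEuclideanLin_apply, gsbE] using hs

lemma gsb_mulVec_basis {A : Matrix (Fin N) (Fin N) ℂ} (hA : A.IsHermitian) (i : Fin N) :
    gsbE (A.mulVec (hA.eigenvectorBasis i)) = (hA.eigenvalues i : ℂ) • hA.eigenvectorBasis i := by
  ext j
  have := congrFun (hA.mulVec_eigenvectorBasis i) j
  simpa [gsbE, Complex.real_smul] using this

lemma gsb_conj_mul (z : ℂ) : (starRingEnd ℂ) z * z = ((‖z‖ ^ 2 : ℝ) : ℂ) := by
  rw [mul_comm, Complex.mul_conj]
  norm_cast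
  rw [Complex.normSq_eq_norm_sq]

lemma gsb_re_inner_mulVec {A : Matrix (Fin N) (Fin N) ℂ} (hA : A.IsHermitian)
    (x : EuclideanSpace ℂ (Fin N)) :
    Complex.re ⟪x, gsbE (A.mulVec x)⟫_ℂ
      = ∑ i, hA.eigenvalues i * ‖⟪hA.eigenvectorBasis i, x⟫_ℂ‖ ^ 2 := by
  have h1 := (hA.eigenvectorBasis.sum_inner_mul_inner x (gsbE (A.mulVec x))).symm
  rw [h1]
  rw [Complex.re_sum]
  refine Finset.sum_congr rfl fun i _ => ?_
  rw [← gsb_herm_inner hA, gsb_mulVec_basis hA, inner_smul_left, Complex.conj_ofReal,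
    ← inner_conj_symm x (hA.eigenvectorBasis i)]
  set c := ⟪hA.eigenvectorBasis i, x⟫_ℂ
  rw [show (starRingEnd ℂ) c * ((hA.eigenvalues i : ℂ) * c)
      = (hA.eigenvalues i : ℂ) * ((starRingEnd ℂ) c * c) from by ring,
    gsb_conj_mul, ← Complex.ofReal_mul, Complex.ofReal_re]

lemma gsb_norm_sq (b : OrthonormalBasis (Fin N) ℂ (EuclideanSpace ℂ (Fin N)))
    (x : EuclideanSpace ℂ (Fin N)) :
    ‖x‖ ^ 2 = ∑ i, ‖⟪b i, x⟫_ℂ‖ ^ 2 := by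
  have h1 := (b.sum_inner_mul_inner x x).symm
  have h2 : ⟪x, x⟫_ℂ = ((‖x‖ ^ 2 : ℝ) : ℂ) := by
    rw [inner_self_eq_norm_sq_to_K]; norm_cast
  rw [h2] at h1
  have h3 : ∀ i, ⟪x, b i⟫_ℂ * ⟪b i, x⟫_ℂ = ((‖⟪b i, x⟫_ℂ‖ ^ 2 : ℝ) : ℂ) := by
    intro i
    rw [← inner_conj_symm x (b i), gsb_conj_mul]
  simp_rw [h3] at h1
  have := congrArg Complex.re h1
  rw [Complex.ofReal_re, Complex.re_sum] at this
  simp only [Complex.ofReal_re] at this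
  exact this

lemma gsb_eigs_eq {A : Matrix (Fin N) (Fin N) ℂ} (hA : A.IsHermitian) (i : Fin N) :
    eigs A i = hA.eigenvalues (Tuple.sort hA.eigenvalues i) := by
  simp [eigs, hA]

lemma gsb_eigs_min {A : Matrix (Fin N) (Fin N) ℂ} (hA : A.IsHermitian) (hN : 0 < N) (j : Fin N) :
    eigs A ⟨0, hN⟩ ≤ hA.eigenvalues j := by
  obtain ⟨k, hk⟩ : ∃ k, Tuple.sort hA.eigenvalues k = j :=
    ⟨(Tuple.sort hA.eigenvalues).symm j, by simp⟩
  rw [gsb_eigs_eq hA, ← hk]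
  exact Tuple.monotone_sort hA.eigenvalues (by simp [Fin.le_def])

lemma gsb_min_le_rayleigh {A : Matrix (Fin N) (Fin N) ℂ} (hA : A.IsHermitian) (hN : 0 < N)
    (x : EuclideanSpace ℂ (Fin N)) (hx : ‖x‖ = 1) :
    eigs A ⟨0, hN⟩ ≤ Complex.re ⟪x, gsbE (A.mulVec x)⟫_ℂ := by
  rw [gsb_re_inner_mulVec hA]
  calc eigs A ⟨0, hN⟩ = eigs A ⟨0, hN⟩ * ‖x‖ ^ 2 := by rw [hx]; ring
  _ = ∑ i, eigs A ⟨0, hN⟩ * ‖⟪hA.eigenvectorBasis i, x⟫_ℂ‖ ^ 2 := by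
      rw [gsb_norm_sq hA.eigenvectorBasis x, Finset.mul_sum]
  _ ≤ _ := Finset.sum_le_sum fun i _ =>
      mul_le_mul_of_nonneg_right (gsb_eigs_min hA hN i) (by positivity)

set_option maxHeartbeats 2000000 in
/-- if `2‖V‖ < Δμ` then `λ_0(Δ H_0 + V)` is non-degenerate and every unit
ground state `g` satisfies `|⟨ψ, g⟩|² ≥ 1 − ‖V‖²/(Δμ − ‖V‖)²`. -/
theorem ground_state_overlap_bound
    (N : ℕ) (hN : 0 < N) (H0 V : Matrix (Fin N) (Fin N) ℂ)
    (hH0 : H0.PosSemidef) (hV : V.IsHermitian)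
    (ψ : EuclideanSpace ℂ (Fin N)) (hψ : ‖ψ‖ = 1)
    (hker : ∀ v : Fin N → ℂ, H0.mulVec v = 0 ↔ ∃ c : ℂ, v = c • ψ)
    (μ : ℝ) (hμpos : 0 < μ)
    (hμ : ∀ i : Fin N, eigs H0 i ≠ 0 → μ ≤ eigs H0 i)
    (Δ : ℝ) (hΔ : 0 < Δ) (hgap : 2 * opNorm V < Δ * μ) :
    (∀ i : Fin N, eigs ((Δ : ℂ) • H0 + V) i = eigs ((Δ : ℂ) • H0 + V) ⟨0, hN⟩ →
        i = ⟨0, hN⟩) ∧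
    (∀ g : EuclideanSpace ℂ (Fin N), ‖g‖ = 1 →
      ((Δ : ℂ) • H0 + V).mulVec g = ((eigs ((Δ : ℂ) • H0 + V) ⟨0, hN⟩ : ℝ) : ℂ) • g →
      1 - (opNorm V) ^ 2 / (Δ * μ - opNorm V) ^ 2 ≤ ‖⟪ψ, g⟫_ℂ‖ ^ 2) := by
  set A : Matrix (Fin N) (Fin N) ℂ := (Δ : ℂ) • H0 + V with hAdef
  have hA : A.IsHermitian := by
    refine Matrix.IsHermitian.add ?_ hV
    unfold Matrix.IsHermitian
    rw [Matrix.conjTranspose_smul, hH0.1]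
    congr 1
    exact Complex.conj_ofReal Δ
  set lam := eigs A ⟨0, hN⟩ with hlam
  have hVn : 0 ≤ opNorm V := norm_nonneg _
  have hpos : 0 < Δ * μ - opNorm V := by nlinarith
  have hratio : opNorm V / (Δ * μ - opNorm V) < 1 := by
    rw [div_lt_one hpos]; nlinarith
  have hratio0 : 0 ≤ opNorm V / (Δ * μ - opNorm V) := by positivity
  have F0 : H0.mulVec ψ = 0 := (hker ψ).mpr ⟨1, by funext k; simp⟩
  have hlamle : lam ≤ opNorm V := by
    have h1 : gsbE (A.mulVec ψ) = gsbE (V.mulVec ψ) := by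
      ext j
      simp [gsbE, hAdef, Matrix.add_mulVec, Matrix.smul_mulVec, F0]
    have h2 := gsb_min_le_rayleigh hA hN ψ hψ
    rw [h1] at h2
    have h3 : Complex.re ⟪ψ, gsbE (V.mulVec ψ)⟫_ℂ ≤ opNorm V := by
      have hra : Complex.re ⟪ψ, gsbE (V.mulVec ψ)⟫_ℂ ≤ ‖⟪ψ, gsbE (V.mulVec ψ)⟫_ℂ‖ := by
        exact Complex.re_le_norm _
      have hnb : ‖⟪ψ, gsbE (V.mulVec ψ)⟫_ℂ‖ ≤ ‖ψ‖ * (opNorm V * ‖ψ‖) :=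
        le_trans (norm_inner_le_norm _ _)
          (mul_le_mul_of_nonneg_left (gsb_norm_mulVec_le V ψ) (norm_nonneg _))
      rw [hψ] at hnb
      linarith [hnb, hra]
    exact le_trans h2 h3
  have hquad : ∀ w : EuclideanSpace ℂ (Fin N), ⟪ψ, w⟫_ℂ = 0 →
      μ * ‖w‖ ^ 2 ≤ Complex.re ⟪w, gsbE (H0.mulVec w)⟫_ℂ := by
    intro w hw
    rw [gsb_re_inner_mulVec hH0.1, gsb_norm_sq hH0.1.eigenvectorBasis w, Finset.mul_sum]
    refine Finset.sum_le_sum fun i _ => ?_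
    by_cases h0 : hH0.1.eigenvalues i = 0
    · have hbz : gsbE (H0.mulVec (hH0.1.eigenvectorBasis i)) = 0 := by
        rw [gsb_mulVec_basis hH0.1 i, h0]; simp
      obtain ⟨d, hd⟩ := (hker (hH0.1.eigenvectorBasis i)).mp ((WithLp.toLp_eq_zero 2).mp hbz)
      have hd' : (hH0.1.eigenvectorBasis i : EuclideanSpace ℂ (Fin N)) = d • ψ := by
        ext j
        simpa using congrFun hd j
      have hz : ⟪hH0.1.eigenvectorBasis i, w⟫_ℂ = 0 := by
        rw [hd', inner_smul_left, hw, mul_zero]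
      rw [hz, h0]; simp
    · have he : eigs H0 ((Tuple.sort hH0.1.eigenvalues).symm i) = hH0.1.eigenvalues i := by
        rw [gsb_eigs_eq hH0.1]; simp
      have hμi : μ ≤ hH0.1.eigenvalues i := by
        rw [← he]; exact hμ _ (by rw [he]; exact h0)
      exact mul_le_mul_of_nonneg_right hμi (by positivity)
  -- the key quantitative estimate
  have key : ∀ g : EuclideanSpace ℂ (Fin N), ‖g‖ = 1 →
      A.mulVec g = ((lam : ℝ) : ℂ) • g →
      ‖g - ⟪ψ, g⟫_ℂ • ψ‖ ≤ opNorm V / (Δ * μ - opNorm V) := by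
    intro g hg heig
    set c := ⟪ψ, g⟫_ℂ with hc
    set w : EuclideanSpace ℂ (Fin N) := g - c • ψ with hwdef
    have hw : ⟪ψ, w⟫_ℂ = 0 := by
      rw [hwdef, inner_sub_right, inner_smul_right, inner_self_eq_norm_sq_to_K, hψ]
      push_cast; ring
    have hwψ : ⟪w, ψ⟫_ℂ = 0 := by
      rw [← inner_conj_symm w ψ, hw, map_zero]
    have hwg : ⟪w, g⟫_ℂ = ((‖w‖ ^ 2 : ℝ) : ℂ) := by
      have hgeq : g = w + c • ψ := by rw [hwdef]; abel
      rw [show ⟪w, g⟫_ℂ = ⟪w, w + c • ψ⟫_ℂ from by rw [← hgeq]]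
      rw [inner_add_right, inner_smul_right, hwψ, mul_zero, add_zero,
        inner_self_eq_norm_sq_to_K]
      norm_cast
    have heig' : gsbE (A.mulVec g) = ((lam : ℝ) : ℂ) • g := by
      ext j
      simpa [gsbE] using congrFun heig j
    have e1 : ⟪w, gsbE (A.mulVec g)⟫_ℂ = ((lam * ‖w‖ ^ 2 : ℝ) : ℂ) := by
      rw [heig', inner_smul_right, hwg]
      push_cast; ring
    have hwfun : (w : Fin N → ℂ) = (g : Fin N → ℂ) - c • (ψ : Fin N → ℂ) := by
      funext k; rfl
    have hH0w : H0.mulVec (w : Fin N → ℂ) = H0.mulVec g := by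
      rw [hwfun, Matrix.mulVec_sub, Matrix.mulVec_smul, F0, smul_zero, sub_zero]
    have e2 : gsbE (A.mulVec g) = (Δ : ℂ) • gsbE (H0.mulVec w) + gsbE (V.mulVec g) := by
      ext j
      have h2 : A.mulVec (g : Fin N → ℂ)
          = (Δ : ℂ) • H0.mulVec (w : Fin N → ℂ) + V.mulVec (g : Fin N → ℂ) := by
        rw [hH0w, hAdef, Matrix.add_mulVec, Matrix.smul_mulVec]
      simpa [gsbE] using congrFun h2 j
    have e3 : ⟪w, gsbE (A.mulVec g)⟫_ℂ
        = (Δ : ℂ) * ⟪w, gsbE (H0.mulVec w)⟫_ℂ + ⟪w, gsbE (V.mulVec g)⟫_ℂ := by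
      rw [e2, inner_add_right, inner_smul_right]
    have e4 : Δ * Complex.re ⟪w, gsbE (H0.mulVec w)⟫_ℂ
        + Complex.re ⟪w, gsbE (V.mulVec g)⟫_ℂ = lam * ‖w‖ ^ 2 := by
      have h5 := congrArg Complex.re (e3.symm.trans e1)
      rw [Complex.add_re, Complex.ofReal_re] at h5
      rw [show ((Δ : ℂ) * ⟪w, gsbE (H0.mulVec w)⟫_ℂ).re
          = Δ * Complex.re ⟪w, gsbE (H0.mulVec w)⟫_ℂ from by
        rw [Complex.mul_re]; simp] at h5
      exact h5
    have e5 : |Complex.re ⟪w, gsbE (V.mulVec g)⟫_ℂ| ≤ opNorm V * ‖w‖ := by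
      have h6 : ‖⟪w, gsbE (V.mulVec g)⟫_ℂ‖ ≤ ‖w‖ * (opNorm V * ‖g‖) :=
        le_trans (norm_inner_le_norm _ _)
          (mul_le_mul_of_nonneg_left (gsb_norm_mulVec_le V g) (norm_nonneg _))
      have h7 : |Complex.re ⟪w, gsbE (V.mulVec g)⟫_ℂ| ≤ ‖⟪w, gsbE (V.mulVec g)⟫_ℂ‖ := by
        exact Complex.abs_re_le_norm _
      rw [hg] at h6
      nlinarith [h6, h7]
    have e6 : μ * ‖w‖ ^ 2 ≤ Complex.re ⟪w, gsbE (H0.mulVec w)⟫_ℂ := hquad w hw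
    have e7 : (Δ * μ - opNorm V) * ‖w‖ ^ 2 ≤ opNorm V * ‖w‖ := by
      have h8 : lam * ‖w‖ ^ 2 ≤ opNorm V * ‖w‖ ^ 2 :=
        mul_le_mul_of_nonneg_right hlamle (sq_nonneg _)
      have h9 := mul_le_mul_of_nonneg_left e6 hΔ.le
      have h10 := (abs_le.mp e5).1
      nlinarith [h8, h9, h10, e4]
    rcases eq_or_lt_of_le (norm_nonneg w) with h0 | h0
    · rw [← h0]; exact hratio0
    · rw [le_div_iff₀ hpos]
      nlinarith [e7, h0]
  constructor
  · -- non-degeneracy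
    intro i hi
    by_contra hne
    have hne' : Tuple.sort hA.eigenvalues i ≠ Tuple.sort hA.eigenvalues ⟨0, hN⟩ :=
      fun h => hne (Equiv.injective _ h)
    have hval1 : hA.eigenvalues (Tuple.sort hA.eigenvalues ⟨0, hN⟩) = lam :=
      (gsb_eigs_eq hA ⟨0, hN⟩).symm
    have hval2 : hA.eigenvalues (Tuple.sort hA.eigenvalues i) = lam := by
      rw [← gsb_eigs_eq hA i]; exact hi
    have horth := hA.eigenvectorBasis.orthonormal
    set b := hA.eigenvectorBasis with hbdef
    have heigb : ∀ j : Fin N, hA.eigenvalues j = lam →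
        A.mulVec (b j : Fin N → ℂ) = ((lam : ℝ) : ℂ) • (b j : Fin N → ℂ) := by
      intro j hj
      funext k
      have h := congrArg (fun v : EuclideanSpace ℂ (Fin N) => v k) (gsb_mulVec_basis hA j)
      rw [hj] at h
      simpa [gsbE] using h
    set g1 : EuclideanSpace ℂ (Fin N) := b (Tuple.sort hA.eigenvalues ⟨0, hN⟩) with hg1
    set g2 : EuclideanSpace ℂ (Fin N) := b (Tuple.sort hA.eigenvalues i) with hg2
    have hnorm1 : ‖g1‖ = 1 := horth.1 _
    have hnorm2 : ‖g2‖ = 1 := horth.1 _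
    have hip : ⟪g2, g1⟫_ℂ = 0 := horth.2 hne'
    have heig1 : A.mulVec (g1 : Fin N → ℂ) = ((lam : ℝ) : ℂ) • (g1 : Fin N → ℂ) :=
      heigb _ hval1
    have heig2 : A.mulVec (g2 : Fin N → ℂ) = ((lam : ℝ) : ℂ) • (g2 : Fin N → ℂ) :=
      heigb _ hval2
    set a1 := ⟪ψ, g1⟫_ℂ with ha1
    set a2 := ⟪ψ, g2⟫_ℂ with ha2
    by_cases hz : a1 = 0
    · have hk := key g1 hnorm1 heig1
      rw [← ha1, hz, zero_smul, sub_zero, hnorm1] at hk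
      linarith
    · set u : EuclideanSpace ℂ (Fin N) := a2 • g1 - a1 • g2 with hu
      have hg2u : ⟪g2, u⟫_ℂ = -a1 := by
        rw [hu, inner_sub_right, inner_smul_right, inner_smul_right, hip,
          inner_self_eq_norm_sq_to_K, hnorm2, mul_zero, zero_sub]
        norm_num
      have hune : u ≠ 0 := by
        intro h
        rw [h, inner_zero_right] at hg2u
        exact hz (neg_eq_zero.mp hg2u.symm)
      have hnu : ‖u‖ ≠ 0 := norm_ne_zero_iff.mpr hune
      set g : EuclideanSpace ℂ (Fin N) := ((‖u‖ : ℂ))⁻¹ • u with hgdef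
      have hgn : ‖g‖ = 1 := by
        rw [hgdef, norm_smul, norm_inv, Complex.norm_real, Real.norm_eq_abs, abs_norm,
          inv_mul_cancel₀ hnu]
      have hufun : (u : Fin N → ℂ) = a2 • (g1 : Fin N → ℂ) - a1 • (g2 : Fin N → ℂ) := by
        funext k; rfl
      have hueig : A.mulVec (u : Fin N → ℂ) = ((lam : ℝ) : ℂ) • (u : Fin N → ℂ) := by
        rw [hufun, Matrix.mulVec_sub, Matrix.mulVec_smul, Matrix.mulVec_smul, heig1, heig2]
        module
      have hgfun : (g : Fin N → ℂ) = ((‖u‖ : ℂ))⁻¹ • (u : Fin N → ℂ) := by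
        funext k; rfl
      have hgeig : A.mulVec (g : Fin N → ℂ) = ((lam : ℝ) : ℂ) • (g : Fin N → ℂ) := by
        rw [hgfun, Matrix.mulVec_smul, hueig]
        module
      have hpu : ⟪ψ, u⟫_ℂ = 0 := by
        rw [hu, inner_sub_right, inner_smul_right, inner_smul_right, ← ha1, ← ha2]
        ring
      have hpg : ⟪ψ, g⟫_ℂ = 0 := by
        rw [hgdef, inner_smul_right, hpu, mul_zero]
      have hk := key g hgn hgeig
      rw [hpg, zero_smul, sub_zero, hgn] at hk
      linarith
  · -- overlap bound
    intro g hg heig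
    have hk := key g hg heig
    set c := ⟪ψ, g⟫_ℂ with hc
    set w : EuclideanSpace ℂ (Fin N) := g - c • ψ with hwdef
    have hw : ⟪ψ, w⟫_ℂ = 0 := by
      rw [hwdef, inner_sub_right, inner_smul_right, inner_self_eq_norm_sq_to_K, hψ]
      push_cast; ring
    have hsum : ‖c‖ ^ 2 + ‖w‖ ^ 2 = 1 := by
      have hgeq : g = c • ψ + w := by rw [hwdef]; abel
      have hcross : RCLike.re ⟪c • ψ, w⟫_ℂ = 0 := by
        rw [inner_smul_left, hw, mul_zero]
        simp
      have hns := @norm_add_sq ℂ _ _ _ _ (c • ψ) w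
      rw [← hgeq, hg, hcross, norm_smul, hψ, mul_one] at hns
      nlinarith [hns]
    have hwle : ‖w‖ ^ 2 ≤ (opNorm V / (Δ * μ - opNorm V)) ^ 2 :=
      pow_le_pow_left₀ (norm_nonneg w) hk 2
    have hdp : (opNorm V / (Δ * μ - opNorm V)) ^ 2
        = opNorm V ^ 2 / (Δ * μ - opNorm V) ^ 2 := div_pow _ _ 2
    nlinarith [hsum, hwle, hdp]
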